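/- arXiv:2206.05721 — 2 statements merged into one kernel-verified Lean document; each statement's English description precedes it below -/
import Mathlib

section
/- In the free Z-module spanned by tuples of group elements, the element β_t := ∑_{π ∈ Sym_k} sgn(π) (π̲.(t_1,…,t_k)) (where π̲ is the braid lift of π acting via the Hurwitz action) satisfies β_t = ∑_{i=1}^k (−1)^{k−i} (β_{t(î)}, (t_{i+1}⋯t_k)^{-1} t_i (t_{i+1}⋯t_k)), where t(î) denotes the tuple obtained by removing the i-th entry and (β, g) denotes appending g to each tuple in the linear combination β. -/
/-- The Hurwitz move `σ_{i+1}` (0-based index `i`) on a tuple of group elements,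
represented as a list: it replaces `(…, a, b, …)` at positions `i, i+1` by
`(…, b, b⁻¹ * a * b, …)`. -/
def hurwitzMove {G : Type*} [Group G] : ℕ → List G → List G
  | 0, a :: b :: l => b :: (b⁻¹ * a * b) :: l
  | n + 1, a :: l => a :: hurwitzMove n l
  | _, l => l

/-- The Hurwitz action of a word in the braid generators (a braid `σ_{i_1} ⋯ σ_{i_p}`
acts by applying `σ_{i_p}` first), with 0-based generator indices. -/
def hurwitzWord {G : Type*} [Group G] (w : List ℕ) (t : List G) : List G :=
  w.foldr hurwitzMove t

/-- The standard Coxeter generator `s_{i+1} = (i+1, i+2)` (0-based index `i`) of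
`Sym_k = Perm (Fin k)`, defined to be the identity if `i + 1 ≥ k`. -/
def symGenN (k : ℕ) (i : ℕ) : Equiv.Perm (Fin k) :=
  if h : i + 1 < k then Equiv.swap ⟨i, by omega⟩ ⟨i + 1, h⟩ else 1

/-- `w` is a reduced expression (with 0-based generator indices) for
`π ∈ Sym_k` in the standard generators `s_i`. -/
def IsReducedWordN (k : ℕ) (π : Equiv.Perm (Fin k)) (w : List ℕ) : Prop :=
  (∀ i ∈ w, i + 1 < k) ∧ (w.map (symGenN k)).prod = π ∧
    ∀ w' : List ℕ, (∀ i ∈ w', i + 1 < k) → (w'.map (symGenN k)).prod = π →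
      w.length ≤ w'.length

/-- The element `β_t = ∑_{π ∈ Sym_k} sgn(π) (π̲.t)` of the free abelian group on
tuples, where `π̲` is the braid lift of `π` (given by a choice `A` of reduced
word for each permutation) acting via the Hurwitz action. -/
noncomputable def betaElt {G : Type*} [Group G] (k : ℕ)
    (A : Equiv.Perm (Fin k) → List ℕ) (t : List G) : FreeAbelianGroup (List G) :=
  ∑ π : Equiv.Perm (Fin k),
    ((Equiv.Perm.sign π : ℤˣ) : ℤ) • FreeAbelianGroup.of (hurwitzWord (A π) t)

theorem Equiv.Perm.inv_apply_self {α : Type*} (f : Equiv.Perm α) (x : α) : f⁻¹ (f x) = x :=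
  Equiv.symm_apply_apply f x

theorem Equiv.Perm.apply_inv_self {α : Type*} (f : Equiv.Perm α) (x : α) : f (f⁻¹ x) = x :=
  Equiv.apply_symm_apply f x

section BetaAux

open Equiv List

variable {G : Type*} [Group G]

/-- Conjugating factor in the explicit formula for the Hurwitz action of a braid lift. -/
def cfac (k : ℕ) (π : Equiv.Perm (Fin k)) (t : List G) (j : Fin k) : G :=
  (((List.finRange k).filter (fun m => decide (π⁻¹ j < m ∧ π m < j))).map
    (fun m => t.getD m.val 1)).prod

/-- Explicit formula for the result of the Hurwitz action of the braid lift of `π`. -/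
def eTuple (k : ℕ) (π : Equiv.Perm (Fin k)) (t : List G) : List G :=
  (List.finRange k).map
    (fun j => (cfac k π t j)⁻¹ * t.getD (π⁻¹ j).val 1 * cfac k π t j)

theorem eTuple_length (k : ℕ) (π : Equiv.Perm (Fin k)) (t : List G) :
    (eTuple k π t).length = k := by simp [eTuple]

theorem hurwitzMove_length : ∀ (i : ℕ) (L : List G), (hurwitzMove i L).length = L.length
  | 0, [] => rfl
  | 0, [a] => rfl
  | 0, a :: b :: l => rfl
  | n+1, [] => rfl
  | n+1, a :: l => by simp [hurwitzMove, hurwitzMove_length n l]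

theorem hurwitzMove_getD : ∀ (i : ℕ) (L : List G), i + 1 < L.length → ∀ j : ℕ,
    (hurwitzMove i L).getD j 1 =
      if j = i then L.getD (i+1) 1
      else if j = i+1 then (L.getD (i+1) 1)⁻¹ * L.getD i 1 * L.getD (i+1) 1
      else L.getD j 1
  | 0, [], h, _ => by simp at h
  | 0, [a], h, _ => by simp at h
  | 0, a :: b :: l, _, 0 => by simp [hurwitzMove]
  | 0, a :: b :: l, _, 1 => by simp [hurwitzMove]
  | 0, a :: b :: l, _, (j+2) => by simp [hurwitzMove]
  | n+1, [], h, _ => by simp at h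
  | n+1, a :: l, h, 0 => by simp [hurwitzMove]
  | n+1, a :: l, h, (j+1) => by
      have ih := hurwitzMove_getD n l (by simpa using h) j
      simp only [hurwitzMove, List.getD_cons_succ]
      rw [ih]
      simp only [Nat.add_right_cancel_iff]

theorem sorted_split {α : Type*} [LinearOrder α] :
    ∀ (l : List α), l.Pairwise (· < ·) → ∀ x ∈ l,
      l = l.filter (fun m => decide (m < x)) ++ x :: l.filter (fun m => decide (x < m))
  | [], _, x, hx => by simp at hx
  | a :: l, hs, x, hx => by
      rcases List.pairwise_cons.mp hs with ⟨ha, hl⟩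
      rcases eq_or_ne a x with rfl | hne
      · have h1 : l.filter (fun m => decide (m < a)) = [] :=
          List.filter_eq_nil_iff.mpr (fun m hm => by simpa using not_lt.mpr (ha m hm).le)
        have h2 : l.filter (fun m => decide (a < m)) = l :=
          List.filter_eq_self.mpr (fun m hm => by simpa using ha m hm)
        simp [List.filter_cons, h1, h2]
      · have hx' : x ∈ l := by
          rcases List.mem_cons.mp hx with h | h
          · exact absurd h.symm hne
          · exact h
        have hax : a < x := ha x hx'
        have IH := sorted_split l hl x hx'
        simp only [List.filter_cons, decide_eq_true_eq, if_pos hax, if_neg (not_lt.mpr hax.le)]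
        rw [List.cons_append, ← IH]

theorem finRange_split (k : ℕ) (x : Fin k) :
    List.finRange k = ((List.finRange k).filter (fun m => decide (m < x))) ++ x ::
      ((List.finRange k).filter (fun m => decide (x < m))) :=
  sorted_split _ (List.pairwise_lt_finRange k) x (List.mem_finRange x)

theorem filter_split_at (k : ℕ) (x : Fin k) (p : Fin k → Bool) (hp : p x = true) :
    (List.finRange k).filter p =
      ((List.finRange k).filter (fun m => p m && decide (m < x))) ++ x ::
      ((List.finRange k).filter (fun m => p m && decide (x < m))) := by
  conv_lhs => rw [finRange_split k x]
  rw [List.filter_append, List.filter_cons, if_pos hp, List.filter_filter, List.filter_filter]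

theorem map_val_finRange_filter (k : ℕ) (p : Fin k → Bool) (q : ℕ → Bool)
    (hq : ∀ m : Fin k, p m = q (m : ℕ)) :
    ((List.finRange k).filter p).map Fin.val = (List.range k).filter q := by
  rw [← List.map_coe_finRange_eq_range, List.filter_map]
  congr 1
  exact List.filter_congr (fun m _ => hq m)

theorem range_filter_lt (k i : ℕ) :
    (List.range k).filter (fun m => decide (i < m)) =
      (List.range (k - (i+1))).map (fun x => (i+1) + x) := by
  rcases le_or_gt k (i+1) with hk | hk
  · rw [show k - (i+1) = 0 by omega]
    simp only [List.range_zero, List.map_nil]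
    exact List.filter_eq_nil_iff.mpr (fun m hm => by
      simp only [decide_eq_true_eq]; have := List.mem_range.mp hm; omega)
  · conv_lhs => rw [show k = (i+1) + (k - (i+1)) by omega, List.range_add]
    rw [List.filter_append, List.filter_map]
    have h1 : (List.range (i+1)).filter (fun m => decide (i < m)) = [] :=
      List.filter_eq_nil_iff.mpr (fun m hm => by
        simp only [decide_eq_true_eq]; have := List.mem_range.mp hm; omega)
    have h2 : (List.range (k - (i+1))).filter ((fun m => decide (i < m)) ∘ (fun x => (i+1)+x)) =
        List.range (k - (i+1)) :=
      List.filter_eq_self.mpr (fun m _ => by simp; omega)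
    rw [h1, h2, List.nil_append]

theorem drop_eq_range_map (t : List G) (j : ℕ) :
    t.drop j = (List.range (t.length - j)).map (fun x => t.getD (j + x) 1) := by
  apply List.ext_getElem
  · simp
  · intro x h1 h2
    have hx : x < t.length - j := by simpa using h2
    rw [List.getElem_drop]
    rw [List.getElem_map, List.getElem_range, List.getD_eq_getElem t 1 (by omega)]

theorem eTuple_one (k : ℕ) (t : List G) (hl : t.length = k) : eTuple k 1 t = t := by
  subst hl
  have hc : ∀ j : Fin t.length, cfac t.length 1 t j = 1 := by
    intro j
    unfold cfac
    rw [List.filter_eq_nil_iff.mpr (fun m _ => by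
      simp only [decide_eq_true_eq, Equiv.Perm.one_apply, inv_one]
      rintro ⟨hm1, hm2⟩
      exact absurd hm2 (not_lt.mpr hm1.le))]
    rfl
  unfold eTuple
  simp only [hc, inv_one, one_mul, mul_one, Equiv.Perm.one_apply]
  apply List.ext_getElem
  · simp
  · intro j h1 h2
    simp only [List.getElem_map, List.getElem_finRange, Fin.coe_cast]
    exact List.getD_eq_getElem t 1 h2

theorem filter_split_at_neg (k : ℕ) (x : Fin k) (p : Fin k → Bool) (hp : p x = false) :
    (List.finRange k).filter p =
      ((List.finRange k).filter (fun m => p m && decide (m < x))) ++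
      ((List.finRange k).filter (fun m => p m && decide (x < m))) := by
  conv_lhs => rw [finRange_split k x]
  rw [List.filter_append, List.filter_cons, if_neg (by simp [hp]), List.filter_filter,
    List.filter_filter]

theorem eTuple_getD (k : ℕ) (π : Equiv.Perm (Fin k)) (t : List G) (j : Fin k) :
    (eTuple k π t).getD (j : ℕ) 1 =
      (cfac k π t j)⁻¹ * t.getD (π⁻¹ j).val 1 * cfac k π t j := by
  unfold eTuple
  rw [List.getD_eq_getElem _ 1 (by simpa using j.isLt)]
  simp only [List.getElem_map, List.getElem_finRange, Fin.cast_mk, Fin.eta]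

theorem swap_lt_left (k i : ℕ) (h : i+1 < k) (v : Fin k) :
    (Equiv.swap (⟨i, by omega⟩ : Fin k) ⟨i+1, h⟩ v < ⟨i, by omega⟩) ↔ (v < ⟨i, by omega⟩) := by
  rcases v with ⟨vv, hv⟩
  simp only [Equiv.swap_apply_def, Fin.lt_def, Fin.ext_iff, Fin.mk.injEq]
  split_ifs <;> simp_all <;> omega

theorem swap_lt_right (k i : ℕ) (h : i+1 < k) (v : Fin k) :
    (Equiv.swap (⟨i, by omega⟩ : Fin k) ⟨i+1, h⟩ v < ⟨i+1, h⟩) ↔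
      (v < ⟨i, by omega⟩ ∨ v = ⟨i+1, h⟩) := by
  rcases v with ⟨vv, hv⟩
  simp only [Equiv.swap_apply_def, Fin.lt_def, Fin.ext_iff, Fin.mk.injEq]
  split_ifs <;> simp_all <;> omega

theorem swap_lt_other (k i : ℕ) (h : i+1 < k) (v j : Fin k) (hj1 : (j : ℕ) ≠ i)
    (hj2 : (j : ℕ) ≠ i+1) :
    (Equiv.swap (⟨i, by omega⟩ : Fin k) ⟨i+1, h⟩ v < j) ↔ (v < j) := by
  rcases v with ⟨vv, hv⟩
  simp only [Equiv.swap_apply_def, Fin.lt_def, Fin.ext_iff, Fin.mk.injEq]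
  split_ifs <;> simp_all <;> omega

theorem eTuple_move (k : ℕ) (i : ℕ) (h : i + 1 < k) (π : Equiv.Perm (Fin k)) (t : List G)
    (hd : π⁻¹ ⟨i, by omega⟩ < π⁻¹ ⟨i+1, h⟩) :
    hurwitzMove i (eTuple k π t) = eTuple k (symGenN k i * π) t := by
  have hs : symGenN k i = Equiv.swap ⟨i, by omega⟩ ⟨i+1, h⟩ := by rw [symGenN, dif_pos h]
  rw [hs]
  set a : Fin k := ⟨i, by omega⟩ with hadef
  set b : Fin k := ⟨i+1, h⟩ with hbdef
  set s := Equiv.swap a b with hsdef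
  have haval : (a : ℕ) = i := rfl
  have hbval : (b : ℕ) = i + 1 := rfl
  have hab : a < b := by rw [Fin.lt_def, haval, hbval]; omega
  have hinv : ∀ x : Fin k, (s * π)⁻¹ x = π⁻¹ (s x) := by
    intro x
    rw [mul_inv_rev, Equiv.Perm.mul_apply, hsdef, Equiv.swap_inv]
  have hinva : (s * π)⁻¹ a = π⁻¹ b := by
    rw [hinv, hsdef, Equiv.swap_apply_left]
  have hinvb : (s * π)⁻¹ b = π⁻¹ a := by
    rw [hinv, hsdef, Equiv.swap_apply_right]
  apply List.ext_getElem
  · rw [hurwitzMove_length, eTuple_length, eTuple_length]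
  · intro j hj1 hj2
    rw [hurwitzMove_length, eTuple_length] at hj1
    rw [← List.getD_eq_getElem _ 1, ← List.getD_eq_getElem _ 1]
    rw [hurwitzMove_getD i _ (by rw [eTuple_length]; exact h) j]
    by_cases hji : j = i
    · subst hji
      rw [if_pos rfl]
      show (eTuple k π t).getD ((b : Fin k) : ℕ) 1 = (eTuple k (s * π) t).getD ((a : Fin k) : ℕ) 1
      rw [eTuple_getD k π t b, eTuple_getD k (s * π) t a, hinva]
      suffices hc : cfac k (s * π) t a = cfac k π t b by rw [hc]
      unfold cfac
      refine congrArg List.prod (congrArg (List.map _) (List.filter_congr (fun m _ => ?_)))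
      rw [decide_eq_decide, hinva, Equiv.Perm.mul_apply]
      constructor
      · rintro ⟨h1, h2⟩
        exact ⟨h1, lt_trans ((swap_lt_left k j h (π m)).mp h2) hab⟩
      · rintro ⟨h1, h2⟩
        refine ⟨h1, (swap_lt_left k j h (π m)).mpr ?_⟩
        have hne : π m ≠ a := by
          intro e
          have hm : m = π⁻¹ a := by rw [← e, Equiv.Perm.inv_apply_self]
          rw [hm] at h1
          exact absurd hd (not_lt.mpr h1.le)
        have hv := Fin.lt_def.mp h2
        have hnv : ((π m : Fin k) : ℕ) ≠ (a : ℕ) := fun e => hne (Fin.ext e)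
        rw [Fin.lt_def, haval]
        rw [hbval] at hv
        rw [haval] at hnv
        omega
    · by_cases hji2 : j = i + 1
      · subst hji2
        rw [if_neg hji, if_pos rfl]
        show ((eTuple k π t).getD ((b : Fin k) : ℕ) 1)⁻¹ *
            (eTuple k π t).getD ((a : Fin k) : ℕ) 1 * (eTuple k π t).getD ((b : Fin k) : ℕ) 1 =
            (eTuple k (s * π) t).getD ((b : Fin k) : ℕ) 1
        rw [eTuple_getD k π t b, eTuple_getD k π t a, eTuple_getD k (s * π) t b, hinvb]
        set f : Fin k → G := fun m => t.getD m.val 1 with hfdef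
        set m0 : Fin k := π⁻¹ b with hm0
        set p : Fin k → Bool := fun m => decide (π⁻¹ a < m ∧ π m < a) with hpdef
        set L1 := (List.finRange k).filter (fun m => p m && decide (m < m0)) with hL1
        set L2 := (List.finRange k).filter (fun m => p m && decide (m0 < m)) with hL2
        have hmne : ∀ m : Fin k, π m = b ↔ m = m0 := by
          intro m
          constructor
          · intro e; rw [hm0, ← e, Equiv.Perm.inv_apply_self]
          · intro e; rw [e, hm0, Equiv.Perm.apply_inv_self]
        have hA : cfac k π t a = (L1.map f).prod * (L2.map f).prod := by
          unfold cfac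
          rw [filter_split_at_neg k m0 p (by
            simp only [hpdef, decide_eq_false_iff_not]
            rintro ⟨-, h2⟩
            rw [hm0, Equiv.Perm.apply_inv_self] at h2
            exact absurd h2 (not_lt.mpr hab.le))]
          rw [List.map_append, List.prod_append]
        have hB : cfac k π t b = (L2.map f).prod := by
          unfold cfac
          rw [hL2]
          refine congrArg List.prod (congrArg (List.map _) (List.filter_congr (fun m _ => ?_)))
          have hrhs : (p m && decide (m0 < m)) = decide ((π⁻¹ a < m ∧ π m < a) ∧ m0 < m) := by
            simp only [hpdef, Bool.decide_and]
          rw [hrhs, decide_eq_decide]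
          constructor
          · rintro ⟨h1, h2⟩
            have hm0m : m0 < m := h1
            have hne : π m ≠ a := by
              intro e
              have hm : m = π⁻¹ a := by rw [← e, Equiv.Perm.inv_apply_self]
              rw [hm] at hm0m
              exact absurd (lt_trans hd hm0m) (lt_irrefl _)
            have hlt : π m < a := by
              have hv := Fin.lt_def.mp h2
              have hnv : ((π m : Fin k) : ℕ) ≠ (a : ℕ) := fun e => hne (Fin.ext e)
              rw [Fin.lt_def, haval]
              rw [hbval] at hv
              rw [haval] at hnv
              omega
            exact ⟨⟨lt_trans hd hm0m, hlt⟩, hm0m⟩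
          · rintro ⟨⟨h1, h2⟩, h3⟩
            exact ⟨h3, lt_trans h2 hab⟩
        have hC : cfac k (s * π) t b = (L1.map f).prod * (f m0 * (L2.map f).prod) := by
          unfold cfac
          have step1 : ((List.finRange k).filter
              (fun m => decide ((s * π)⁻¹ b < m ∧ (s * π) m < b))) =
              ((List.finRange k).filter (fun m => decide (π⁻¹ a < m ∧ (π m < a ∨ π m = b)))) := by
            refine List.filter_congr (fun m _ => ?_)
            rw [decide_eq_decide, hinvb, Equiv.Perm.mul_apply]
            constructor
            · rintro ⟨h1, h2⟩
              exact ⟨h1, (swap_lt_right k i h (π m)).mp h2⟩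
            · rintro ⟨h1, h2⟩
              exact ⟨h1, (swap_lt_right k i h (π m)).mpr h2⟩
          rw [step1]
          rw [filter_split_at k m0 _ (by
            simp only [decide_eq_true_eq]
            exact ⟨hd, Or.inr (by rw [hm0, Equiv.Perm.apply_inv_self])⟩)]
          have e1 : ((List.finRange k).filter
              (fun m => decide (π⁻¹ a < m ∧ (π m < a ∨ π m = b)) && decide (m < m0))) = L1 := by
            rw [hL1]
            refine List.filter_congr (fun m _ => ?_)
            simp only [hpdef, ← Bool.decide_and, decide_eq_decide]
            constructor
            · rintro ⟨⟨h1, h2 | h2⟩, h3⟩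
              · exact ⟨⟨h1, h2⟩, h3⟩
              · rw [hmne m] at h2
                rw [h2] at h3
                exact absurd h3 (lt_irrefl _)
            · rintro ⟨⟨h1, h2⟩, h3⟩
              exact ⟨⟨h1, Or.inl h2⟩, h3⟩
          have e2 : ((List.finRange k).filter
              (fun m => decide (π⁻¹ a < m ∧ (π m < a ∨ π m = b)) && decide (m0 < m))) = L2 := by
            rw [hL2]
            refine List.filter_congr (fun m _ => ?_)
            simp only [hpdef, ← Bool.decide_and, decide_eq_decide]
            constructor
            · rintro ⟨⟨h1, h2 | h2⟩, h3⟩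
              · exact ⟨⟨h1, h2⟩, h3⟩
              · rw [hmne m] at h2
                rw [h2] at h3
                exact absurd h3 (lt_irrefl _)
            · rintro ⟨⟨h1, h2⟩, h3⟩
              exact ⟨⟨h1, Or.inl h2⟩, h3⟩
          rw [e1, e2, List.map_append, List.prod_append, List.map_cons, List.prod_cons]
        rw [hA, hB, hC]
        have : f m0 = t.getD m0.val 1 := rfl
        rw [← this]
        group
      · rw [if_neg hji, if_neg hji2]
        have hjk : j < k := by simpa using hj1
        set jf : Fin k := ⟨j, hjk⟩ with hjf
        show (eTuple k π t).getD ((jf : Fin k) : ℕ) 1 = (eTuple k (s * π) t).getD ((jf : Fin k) : ℕ) 1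
        rw [eTuple_getD k π t jf, eTuple_getD k (s * π) t jf]
        have hsj : s jf = jf := by
          rw [hsdef]
          refine Equiv.swap_apply_of_ne_of_ne ?_ ?_
          · exact fun e => hji (by simpa [hjf, hadef, Fin.ext_iff] using e)
          · exact fun e => hji2 (by simpa [hjf, hbdef, Fin.ext_iff] using e)
        have hinvj : (s * π)⁻¹ jf = π⁻¹ jf := by rw [hinv, hsj]
        rw [hinvj]
        suffices hc : cfac k (s * π) t jf = cfac k π t jf by rw [hc]
        unfold cfac
        refine congrArg List.prod (congrArg (List.map _) (List.filter_congr (fun m _ => ?_)))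
        rw [decide_eq_decide, hinvj, Equiv.Perm.mul_apply]
        rw [show (s (π m) < jf) ↔ (π m < jf) from swap_lt_other k i h (π m) jf hji hji2]

/-- Number of inversions of a permutation. -/
def invNum (k : ℕ) (π : Equiv.Perm (Fin k)) : ℕ :=
  (Finset.univ.filter (fun p : Fin k × Fin k => p.1 < p.2 ∧ π p.2 < π p.1)).card

theorem swap_adj_lt (k i : ℕ) (h : i+1 < k) (u v : Fin k) :
    (Equiv.swap (⟨i, by omega⟩ : Fin k) ⟨i+1, h⟩ v < Equiv.swap ⟨i, by omega⟩ ⟨i+1, h⟩ u)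
      ↔ ((v < u ∧ ¬(u = ⟨i+1, h⟩ ∧ v = ⟨i, by omega⟩)) ∨
          (u = (⟨i, by omega⟩ : Fin k) ∧ v = ⟨i+1, h⟩)) := by
  rcases u with ⟨uv, hu⟩
  rcases v with ⟨vv, hv⟩
  simp only [Equiv.swap_apply_def, Fin.lt_def, Fin.ext_iff, Fin.mk.injEq]
  split_ifs <;> simp_all <;> omega

theorem invNum_mul_symGen (k i : ℕ) (h : i+1 < k) (π : Equiv.Perm (Fin k))
    (hd : π⁻¹ ⟨i, by omega⟩ < π⁻¹ ⟨i+1, h⟩) :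
    invNum k (symGenN k i * π) = invNum k π + 1 := by
  set a : Fin k := ⟨i, by omega⟩ with ha
  set b : Fin k := ⟨i+1, h⟩ with hb
  have hs : symGenN k i = Equiv.swap a b := by rw [symGenN, dif_pos h]
  have key : (Finset.univ.filter
        (fun p : Fin k × Fin k => p.1 < p.2 ∧ (symGenN k i * π) p.2 < (symGenN k i * π) p.1))
      = insert (π⁻¹ a, π⁻¹ b)
          (Finset.univ.filter (fun p : Fin k × Fin k => p.1 < p.2 ∧ π p.2 < π p.1)) := by
    ext p
    simp only [Finset.mem_insert, Finset.mem_filter, Finset.mem_univ, true_and, hs,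
      Equiv.Perm.mul_apply]
    rw [swap_adj_lt k i h (π p.1) (π p.2)]
    constructor
    · rintro ⟨h1, h2 | h2⟩
      · exact Or.inr ⟨h1, h2.1⟩
      · refine Or.inl (Prod.ext ?_ ?_)
        · simp only []
          rw [show p.1 = π⁻¹ (π p.1) by simp, h2.1]
        · simp only []
          rw [show p.2 = π⁻¹ (π p.2) by simp, h2.2]
    · rintro (rfl | ⟨h1, h2⟩)
      · exact ⟨hd, Or.inr ⟨by simp [ha], by simp [hb]⟩⟩
      · refine ⟨h1, Or.inl ⟨h2, ?_⟩⟩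
        rintro ⟨e1, e2⟩
        have hp1 : p.1 = π⁻¹ b := by rw [show p.1 = π⁻¹ (π p.1) by simp, e1]
        have hp2 : p.2 = π⁻¹ a := by rw [show p.2 = π⁻¹ (π p.2) by simp, e2]
        rw [hp1, hp2] at h1
        exact absurd hd (not_lt.mpr h1.le)
  unfold invNum
  rw [key, Finset.card_insert_of_notMem]
  simp only [Finset.mem_filter, Finset.mem_univ, true_and, not_and]
  intro _
  simp only [Equiv.Perm.apply_inv_self]
  rw [ha, hb]
  simp [Fin.lt_def]

theorem invNum_mul_symGen' (k i : ℕ) (h : i+1 < k) (π : Equiv.Perm (Fin k))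
    (hd : π⁻¹ ⟨i+1, h⟩ < π⁻¹ ⟨i, by omega⟩) :
    invNum k π = invNum k (symGenN k i * π) + 1 := by
  have hs : symGenN k i = Equiv.swap ⟨i, by omega⟩ ⟨i+1, h⟩ := by rw [symGenN, dif_pos h]
  have hss : symGenN k i * (symGenN k i * π) = π := by
    rw [← mul_assoc, hs, Equiv.swap_mul_self, one_mul]
  have hd' : (symGenN k i * π)⁻¹ ⟨i, by omega⟩ < (symGenN k i * π)⁻¹ ⟨i+1, h⟩ := by
    rw [mul_inv_rev, hs]
    simp only [Equiv.Perm.mul_apply, Equiv.swap_inv, Equiv.swap_apply_left,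
      Equiv.swap_apply_right]
    exact hd
  have := invNum_mul_symGen k i h (symGenN k i * π) hd'
  rw [hss] at this
  omega

theorem invNum_one (k : ℕ) : invNum k 1 = 0 := by
  unfold invNum
  rw [Finset.card_eq_zero, Finset.filter_eq_empty_iff]
  rintro p - ⟨h1, h2⟩
  simp only [Equiv.Perm.one_apply] at h2
  exact absurd h2 (not_lt.mpr h1.le)

theorem eq_one_of_no_descent (k : ℕ) (π : Equiv.Perm (Fin k))
    (h : ∀ (i : ℕ) (h : i + 1 < k), π⁻¹ ⟨i, by omega⟩ < π⁻¹ ⟨i+1, h⟩) : π = 1 := by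
  match k with
  | 0 => exact Subsingleton.elim _ _
  | k' + 1 =>
    have hsm : StrictMono (fun x => π⁻¹ x) := by
      rw [Fin.strictMono_iff_lt_succ]
      intro i
      have := h i.val (by omega)
      convert this using 2 <;> rfl
    have hle : ∀ (f : Fin (k'+1) → Fin (k'+1)), StrictMono f →
        ∀ x : Fin (k'+1), (x : ℕ) ≤ (f x : ℕ) := by
      intro f hf x
      induction x using Fin.induction with
      | zero => exact Nat.zero_le _
      | succ i ih =>
        have h2 : f i.castSucc < f i.succ := hf (Fin.castSucc_lt_succ (i := i))
        have h3 := Fin.lt_def.mp h2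
        have h4 : (i.castSucc : ℕ) = (i : ℕ) := Fin.coe_castSucc i
        have h5 : (i.succ : ℕ) = (i : ℕ) + 1 := Fin.val_succ i
        omega
    have hsm2 : StrictMono (fun x => π x) := by
      intro x y hxy
      rcases lt_trichotomy (π x) (π y) with h' | h' | h'
      · exact h'
      · exact absurd (π.injective h') (ne_of_lt hxy)
      · exact absurd (hsm h') (by simp [not_lt, hxy.le])
    have hfix : ∀ x, π⁻¹ x = x := by
      intro x
      have h4 : (x : ℕ) ≤ ((π⁻¹ x : Fin (k'+1)) : ℕ) := hle _ hsm x
      have h5 : ((π⁻¹ x : Fin (k'+1)) : ℕ) ≤ (x : ℕ) := by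
        have h6 := hle _ hsm2 (π⁻¹ x)
        simp only [Equiv.Perm.apply_inv_self] at h6
        exact h6
      exact Fin.ext (le_antisymm h5 h4)
    have : π⁻¹ = 1 := Equiv.ext hfix
    rw [← inv_inv π, this, inv_one]

theorem invNum_le_word_length (k : ℕ) (w : List ℕ) (hw : ∀ i ∈ w, i + 1 < k) :
    invNum k ((w.map (symGenN k)).prod) ≤ w.length := by
  induction w with
  | nil => simp [invNum_one]
  | cons i w' ih =>
    have ih' := ih (fun j hj => hw j (List.mem_cons_of_mem _ hj))
    simp only [List.map_cons, List.prod_cons, List.length_cons]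
    have hik : i + 1 < k := hw i List.mem_cons_self
    set π' := (w'.map (symGenN k)).prod with hπ'
    rcases lt_trichotomy (π'⁻¹ ⟨i, by omega⟩) (π'⁻¹ ⟨i+1, hik⟩) with h' | h' | h'
    · rw [invNum_mul_symGen k i hik π' h']; omega
    · exact absurd (π'⁻¹.injective h') (by simp [Fin.ext_iff])
    · have := invNum_mul_symGen' k i hik π' h'
      omega

theorem exists_word_invNum (k : ℕ) (π : Equiv.Perm (Fin k)) :
    ∃ w : List ℕ, (∀ i ∈ w, i + 1 < k) ∧ (w.map (symGenN k)).prod = π ∧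
      w.length = invNum k π := by
  have main : ∀ (N : ℕ) (π : Equiv.Perm (Fin k)), invNum k π ≤ N →
      ∃ w : List ℕ, (∀ i ∈ w, i + 1 < k) ∧ (w.map (symGenN k)).prod = π ∧
        w.length = invNum k π := by
    intro N
    induction N with
    | zero =>
      intro π hN
      by_cases hdesc : ∃ (i : ℕ) (h : i+1 < k), π⁻¹ ⟨i+1, h⟩ < π⁻¹ ⟨i, by omega⟩
      · obtain ⟨i, h, hd⟩ := hdesc
        have := invNum_mul_symGen' k i h π hd
        omega
      · push_neg at hdesc
        have hπ : π = 1 := eq_one_of_no_descent k π (fun i h => by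
          refine lt_of_le_of_ne (hdesc i h) ?_
          exact fun e => by simpa [Fin.ext_iff] using π⁻¹.injective e.symm)
        exact ⟨[], by simp, by simp [hπ], by simp [hπ, invNum_one]⟩
    | succ N ihN =>
      intro π hN
      by_cases hdesc : ∃ (i : ℕ) (h : i+1 < k), π⁻¹ ⟨i+1, h⟩ < π⁻¹ ⟨i, by omega⟩
      · obtain ⟨i, h, hd⟩ := hdesc
        have hrec := invNum_mul_symGen' k i h π hd
        obtain ⟨w, hw1, hw2, hw3⟩ := ihN (symGenN k i * π) (by omega)
        have hs : symGenN k i = Equiv.swap ⟨i, by omega⟩ ⟨i+1, h⟩ := by rw [symGenN, dif_pos h]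
        refine ⟨i :: w, ?_, ?_, ?_⟩
        · intro j hj
          rcases List.mem_cons.mp hj with rfl | hj
          · exact h
          · exact hw1 j hj
        · simp only [List.map_cons, List.prod_cons, hw2]
          rw [← mul_assoc, hs, Equiv.swap_mul_self, one_mul]
        · simp only [List.length_cons, hw3]; omega
      · push_neg at hdesc
        have hπ : π = 1 := eq_one_of_no_descent k π (fun i h => by
          refine lt_of_le_of_ne (hdesc i h) ?_
          exact fun e => by simpa [Fin.ext_iff] using π⁻¹.injective e.symm)
        exact ⟨[], by simp, by simp [hπ], by simp [hπ, invNum_one]⟩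
  exact main (invNum k π) π le_rfl

theorem reduced_length (k : ℕ) (π : Equiv.Perm (Fin k)) (w : List ℕ)
    (hw : IsReducedWordN k π w) : w.length = invNum k π := by
  obtain ⟨h1, h2, h3⟩ := hw
  obtain ⟨w0, hw01, hw02, hw03⟩ := exists_word_invNum k π
  have hle := h3 w0 hw01 hw02
  have hge : invNum k π ≤ w.length := by
    have := invNum_le_word_length k w h1
    rwa [h2] at this
  omega

theorem hurwitzWord_reduced (k : ℕ) (π : Equiv.Perm (Fin k)) (w : List ℕ)
    (hw : IsReducedWordN k π w) (t : List G) (hl : t.length = k) :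
    hurwitzWord w t = eTuple k π t := by
  induction w generalizing π with
  | nil =>
    obtain ⟨-, h2, -⟩ := hw
    simp only [List.map_nil, List.prod_nil] at h2
    subst h2
    exact (eTuple_one k t hl).symm
  | cons i w' ih =>
    obtain ⟨h1, h2, h3⟩ := hw
    have hik : i + 1 < k := h1 i List.mem_cons_self
    set π' := (w'.map (symGenN k)).prod with hπ'
    have hππ' : symGenN k i * π' = π := by simpa using h2
    have hw' : IsReducedWordN k π' w' := by
      refine ⟨fun j hj => h1 j (List.mem_cons_of_mem _ hj), rfl, ?_⟩
      intro w'' hv hp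
      have hs : symGenN k i = Equiv.swap ⟨i, by omega⟩ ⟨i+1, hik⟩ := by rw [symGenN, dif_pos hik]
      have hprod : ((i :: w'').map (symGenN k)).prod = π := by
        simp only [List.map_cons, List.prod_cons, hp]
        exact hππ'
      have := h3 (i :: w'') (fun j hj => by
        rcases List.mem_cons.mp hj with rfl | hj
        · exact hik
        · exact hv j hj) hprod
      simpa using this
    have hlen : (i :: w').length = invNum k π := reduced_length k π (i :: w') ⟨h1, h2, h3⟩
    have hlen' : w'.length = invNum k π' := reduced_length k π' w' hw'
    have hd : π'⁻¹ ⟨i, by omega⟩ < π'⁻¹ ⟨i+1, hik⟩ := by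
      rcases lt_trichotomy (π'⁻¹ ⟨i, by omega⟩) (π'⁻¹ ⟨i+1, hik⟩) with h' | h' | h'
      · exact h'
      · exact absurd (π'⁻¹.injective h') (by simp [Fin.ext_iff])
      · exfalso
        have := invNum_mul_symGen' k i hik π' h'
        rw [hππ'] at this
        simp only [List.length_cons] at hlen
        omega
    calc hurwitzWord (i :: w') t = hurwitzMove i (hurwitzWord w' t) := rfl
      _ = hurwitzMove i (eTuple k π' t) := by rw [ih π' hw']
      _ = eTuple k (symGenN k i * π') t := eTuple_move k i hik π' t hd
      _ = eTuple k π t := by rw [hππ']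


/-! ### The decomposition `Perm (Fin (n+1)) ≃ Fin (n+1) × Perm (Fin n)` based at the last entry -/

def extPerm {n : ℕ} (σ : Equiv.Perm (Fin n)) : Equiv.Perm (Fin (n+1)) :=
  (finSuccEquivLast.symm).permCongr σ.optionCongr

def rhoPerm {n : ℕ} (i : Fin (n+1)) : Equiv.Perm (Fin (n+1)) :=
  Fin.revPerm * (Fin.cycleRange i.rev) * Fin.revPerm

def phiPerm {n : ℕ} (i : Fin (n+1)) (σ : Equiv.Perm (Fin n)) : Equiv.Perm (Fin (n+1)) :=
  extPerm σ * rhoPerm i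

theorem extPerm_castSucc {n : ℕ} (σ : Equiv.Perm (Fin n)) (m : Fin n) :
    extPerm σ (Fin.castSucc m) = Fin.castSucc (σ m) := by
  simp [extPerm, Equiv.permCongr_apply, Equiv.optionCongr_apply]

theorem extPerm_last {n : ℕ} (σ : Equiv.Perm (Fin n)) :
    extPerm σ (Fin.last n) = Fin.last n := by
  simp [extPerm, Equiv.permCongr_apply, Equiv.optionCongr_apply]

theorem rhoPerm_self {n : ℕ} (i : Fin (n+1)) : rhoPerm i i = Fin.last n := by
  simp only [rhoPerm, Equiv.Perm.mul_apply, Fin.revPerm_apply, Fin.cycleRange_self]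
  exact Fin.rev_zero n

theorem rhoPerm_succAbove {n : ℕ} (i : Fin (n+1)) (m : Fin n) :
    rhoPerm i (i.succAbove m) = Fin.castSucc m := by
  simp only [rhoPerm, Equiv.Perm.mul_apply, Fin.revPerm_apply]
  rcases lt_or_ge (Fin.castSucc m) i with hc | hc
  · rw [Fin.succAbove_of_castSucc_lt i m hc]
    rw [Fin.cycleRange_of_gt (Fin.rev_lt_rev.mpr hc)]
    exact Fin.rev_rev _
  · rw [Fin.succAbove_of_le_castSucc i m hc]
    have hlt : i < m.succ := lt_of_le_of_lt hc (Fin.castSucc_lt_succ (i := m))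
    rw [Fin.cycleRange_of_lt (Fin.rev_lt_rev.mpr hlt)]
    have hrl : (m.succ).rev < i.rev := Fin.rev_lt_rev.mpr hlt
    have hrlast : (m.succ).rev < Fin.last n := lt_of_lt_of_le hrl (Fin.le_last _)
    have hval : (((m.succ).rev + 1 : Fin (n+1)) : ℕ) = ((m.succ).rev : ℕ) + 1 :=
      Fin.val_add_one_of_lt hrlast
    have : ((m.succ).rev + 1 : Fin (n+1)) = (Fin.castSucc m).rev := by
      apply Fin.ext
      rw [hval, Fin.val_rev, Fin.val_rev]
      have h1 : ((m.succ : Fin (n+1)) : ℕ) = (m : ℕ) + 1 := Fin.val_succ m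
      have h2 : ((Fin.castSucc m : Fin (n+1)) : ℕ) = (m : ℕ) := Fin.coe_castSucc m
      have h3 : (m : ℕ) < n := m.isLt
      omega
    rw [this, Fin.rev_rev]

theorem phiPerm_self {n : ℕ} (i : Fin (n+1)) (σ : Equiv.Perm (Fin n)) :
    phiPerm i σ i = Fin.last n := by
  rw [phiPerm, Equiv.Perm.mul_apply, rhoPerm_self, extPerm_last]

theorem phiPerm_succAbove {n : ℕ} (i : Fin (n+1)) (σ : Equiv.Perm (Fin n)) (m : Fin n) :
    phiPerm i σ (i.succAbove m) = Fin.castSucc (σ m) := by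
  rw [phiPerm, Equiv.Perm.mul_apply, rhoPerm_succAbove, extPerm_castSucc]

theorem phiPerm_inv_last {n : ℕ} (i : Fin (n+1)) (σ : Equiv.Perm (Fin n)) :
    (phiPerm i σ)⁻¹ (Fin.last n) = i := by
  rw [← phiPerm_self i σ, Equiv.Perm.inv_apply_self]

theorem phiPerm_inv_castSucc {n : ℕ} (i : Fin (n+1)) (σ : Equiv.Perm (Fin n)) (j : Fin n) :
    (phiPerm i σ)⁻¹ (Fin.castSucc j) = i.succAbove (σ⁻¹ j) := by
  have h := phiPerm_succAbove i σ (σ⁻¹ j)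
  rw [Equiv.Perm.apply_inv_self] at h
  rw [← h, Equiv.Perm.inv_apply_self]

theorem sign_phiPerm {n : ℕ} (i : Fin (n+1)) (σ : Equiv.Perm (Fin n)) :
    Equiv.Perm.sign (phiPerm i σ) = Equiv.Perm.sign σ * (-1) ^ (n - (i : ℕ)) := by
  have h1 : Equiv.Perm.sign (extPerm σ) = Equiv.Perm.sign σ := by
    rw [extPerm, Equiv.Perm.sign_permCongr, Equiv.optionCongr_sign]
  have h2 : Equiv.Perm.sign (rhoPerm i) = (-1) ^ (n - (i : ℕ)) := by
    rw [rhoPerm, Equiv.Perm.sign_mul, Equiv.Perm.sign_mul, Fin.sign_cycleRange]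
    have hrev : ((i.rev : Fin (n+1)) : ℕ) = n - (i : ℕ) := by
      rw [Fin.val_rev]; omega
    rw [hrev]
    have hsq : ∀ u : ℤˣ, u * (-1 : ℤˣ) ^ (n - (i : ℕ)) * u = (-1) ^ (n - (i : ℕ)) := by
      intro u
      have : u * (-1 : ℤˣ) ^ (n - (i : ℕ)) * u = ((-1 : ℤˣ) ^ (n - (i : ℕ))) * (u * u) := by
        rw [mul_comm u ((-1 : ℤˣ) ^ (n - (i : ℕ))), mul_assoc]
      rw [this, Int.units_mul_self, mul_one]
    exact hsq _
  rw [phiPerm, Equiv.Perm.sign_mul, h1, h2]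

theorem phiPerm_bijective {n : ℕ} :
    Function.Bijective (fun p : Fin (n+1) × Equiv.Perm (Fin n) => phiPerm p.1 p.2) := by
  rw [Fintype.bijective_iff_injective_and_card]
  constructor
  · rintro ⟨i, σ⟩ ⟨i', σ'⟩ he
    simp only at he
    have hi : i = i' := by
      rw [← phiPerm_inv_last i σ, ← phiPerm_inv_last i' σ', he]
    subst hi
    have hσ : σ = σ' := by
      apply Equiv.ext
      intro m
      have h1 := phiPerm_succAbove i σ m
      have h2 := phiPerm_succAbove i σ' m
      rw [he] at h1
      rw [h1] at h2
      exact Fin.castSucc_inj.mp h2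
    rw [hσ]
  · simp [Fintype.card_prod, Fintype.card_perm, Fintype.card_fin, Nat.factorial_succ]

theorem eraseIdx_getD (t : List G) (n : ℕ) (hl : t.length = n+1) (i : Fin (n+1)) (m : Fin n) :
    (t.eraseIdx (i : ℕ)).getD (m : ℕ) 1 = t.getD ((i.succAbove m : Fin (n+1)) : ℕ) 1 := by
  have hlen : (t.eraseIdx (i : ℕ)).length = n := by
    rw [List.length_eraseIdx]
    have := i.isLt
    simp only [hl]
    rw [if_pos (by omega)]
    omega
  have hm1 : (m : ℕ) < (t.eraseIdx (i : ℕ)).length := by rw [hlen]; exact m.isLt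
  have hm2 : ((i.succAbove m : Fin (n+1)) : ℕ) < t.length := by rw [hl]; exact (i.succAbove m).isLt
  rw [List.getD_eq_getElem _ 1 hm1, List.getD_eq_getElem _ 1 hm2, List.getElem_eraseIdx]
  rcases lt_or_ge (Fin.castSucc m) i with hc | hc
  · have h1 : i.succAbove m = Fin.castSucc m := Fin.succAbove_of_castSucc_lt i m hc
    have hv : (m : ℕ) < (i : ℕ) := by simpa [Fin.lt_def] using hc
    rw [dif_pos hv]
    have : ((i.succAbove m : Fin (n+1)) : ℕ) = (m : ℕ) := by rw [h1]; rfl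
    congr 1
    exact this.symm
  · have h1 : i.succAbove m = m.succ := Fin.succAbove_of_le_castSucc i m hc
    have hv : ¬ ((m : ℕ) < (i : ℕ)) := by
      simp only [not_lt]
      simpa [Fin.le_def] using hc
    rw [dif_neg hv]
    have : ((i.succAbove m : Fin (n+1)) : ℕ) = (m : ℕ) + 1 := by rw [h1]; rfl
    congr 1
    exact this.symm

theorem range_filter_ne (n iv : ℕ) (hiv : iv ≤ n) :
    (List.range (n+1)).filter (fun mv => decide (mv ≠ iv)) =
      (List.range n).map (fun mv => if mv < iv then mv else mv + 1) := by
  have hsplit : n + 1 = iv + ((n - iv) + 1) := by omega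
  rw [hsplit, List.range_add, List.filter_append, List.filter_map]
  have h1 : (List.range iv).filter (fun mv => decide (mv ≠ iv)) = List.range iv :=
    List.filter_eq_self.mpr (fun m hm => by
      simp only [decide_eq_true_eq]
      have := List.mem_range.mp hm; omega)
  have h2 : (List.range ((n - iv) + 1)).filter ((fun mv => decide (mv ≠ iv)) ∘ (fun x => iv + x)) =
      List.map Nat.succ (List.range (n - iv)) := by
    rw [List.range_succ_eq_map, List.filter_cons]
    rw [if_neg (by simp)]
    exact List.filter_eq_self.mpr (fun m hm => by
      simp only [Function.comp_apply, decide_eq_true_eq]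
      obtain ⟨x, hx, rfl⟩ := List.mem_map.mp hm
      omega)
  rw [h1, h2]
  have hsplit2 : n = iv + (n - iv) := by omega
  conv_rhs => rw [hsplit2, List.range_add, List.map_append]
  congr 1
  · symm
    have hmc : List.map (fun mv => if mv < iv then mv else mv + 1) (List.range iv) =
        List.map id (List.range iv) :=
      List.map_congr_left (fun m hm => by
        have hmlt := List.mem_range.mp hm
        simp [hmlt])
    rw [hmc, List.map_id]
  · rw [List.map_map, List.map_map]
    exact List.map_congr_left (fun x hx => by
      simp only [Function.comp_apply]
      rw [if_neg (by omega)]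
      omega)

theorem val_succAbove {n : ℕ} (i : Fin (n+1)) (m : Fin n) :
    ((i.succAbove m : Fin (n+1)) : ℕ) = if (m : ℕ) < (i : ℕ) then (m : ℕ) else (m : ℕ) + 1 := by
  rcases lt_or_ge (Fin.castSucc m) i with hc | hc
  · rw [Fin.succAbove_of_castSucc_lt i m hc, if_pos (by simpa [Fin.lt_def] using hc)]
    rfl
  · rw [Fin.succAbove_of_le_castSucc i m hc, if_neg (by
      simp only [not_lt]
      simpa [Fin.le_def] using hc)]
    rfl

theorem finRange_filter_ne (n : ℕ) (i : Fin (n+1)) :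
    (List.finRange (n+1)).filter (fun m => decide (m ≠ i)) =
      (List.finRange n).map i.succAbove := by
  apply List.map_injective_iff.mpr Fin.val_injective
  rw [map_val_finRange_filter (n+1) _ (fun mv => decide (mv ≠ (i : ℕ)))
    (fun m => by rw [decide_eq_decide]; exact not_congr (Fin.val_eq_val m i).symm)]
  rw [List.map_map]
  have : (fun (m : Fin n) => ((i.succAbove m : Fin (n+1)) : ℕ)) =
      (fun (m : Fin n) => if (m : ℕ) < (i : ℕ) then (m : ℕ) else (m : ℕ) + 1) := by
    funext m; exact val_succAbove i m
  show _ = List.map ((fun (m : Fin n) => ((i.succAbove m : Fin (n+1)) : ℕ))) (List.finRange n)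
  rw [this]
  have h2 : List.map (fun (m : Fin n) => if (m : ℕ) < (i : ℕ) then (m : ℕ) else (m : ℕ) + 1)
      (List.finRange n) =
      List.map (fun mv => if mv < (i : ℕ) then mv else mv + 1) (List.map Fin.val (List.finRange n)) := by
    rw [List.map_map]; rfl
  rw [h2, List.map_coe_finRange_eq_range]
  exact range_filter_ne n (i : ℕ) (by have := i.isLt; omega)

theorem eTuple_phi (n : ℕ) (t : List G) (hl : t.length = n + 1) (i : Fin (n+1))
    (σ : Equiv.Perm (Fin n)) :
    eTuple (n+1) (phiPerm i σ) t =
      eTuple n σ (t.eraseIdx (i : ℕ)) ++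
        [(t.drop ((i : ℕ)+1)).prod⁻¹ * t.getD (i : ℕ) 1 * (t.drop ((i : ℕ)+1)).prod] := by
  have hlenL : (eTuple n σ (t.eraseIdx (i : ℕ))).length = n := eTuple_length _ _ _
  apply List.ext_getElem
  · simp [eTuple_length, hlenL]
  · intro j hj1 hj2
    rw [eTuple_length] at hj1
    rw [← List.getD_eq_getElem _ 1, ← List.getD_eq_getElem _ 1]
    by_cases hjn : j < n
    · set jn : Fin n := ⟨j, hjn⟩ with hjndef
      have hR : (eTuple n σ (t.eraseIdx (i : ℕ)) ++
          [(t.drop ((i : ℕ)+1)).prod⁻¹ * t.getD (i : ℕ) 1 * (t.drop ((i : ℕ)+1)).prod]).getD j 1 =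
          (eTuple n σ (t.eraseIdx (i : ℕ))).getD j 1 := by
        rw [List.getD_eq_getElem _ 1 (by simp [hlenL]; omega),
          List.getElem_append_left (by rw [hlenL]; exact hjn),
          List.getD_eq_getElem _ 1 (by rw [hlenL]; exact hjn)]
      rw [hR]
      show (eTuple (n+1) (phiPerm i σ) t).getD ((Fin.castSucc jn : Fin (n+1)) : ℕ) 1 =
        (eTuple n σ (t.eraseIdx (i : ℕ))).getD ((jn : Fin n) : ℕ) 1
      rw [eTuple_getD (n+1) (phiPerm i σ) t (Fin.castSucc jn),
        eTuple_getD n σ (t.eraseIdx (i : ℕ)) jn, phiPerm_inv_castSucc]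
      rw [show (t.eraseIdx (i : ℕ)).getD ((σ⁻¹ jn : Fin n) : ℕ) 1 =
        t.getD ((i.succAbove (σ⁻¹ jn) : Fin (n+1)) : ℕ) 1 from eraseIdx_getD t n hl i (σ⁻¹ jn)]
      suffices hc : cfac (n+1) (phiPerm i σ) t (Fin.castSucc jn) =
          cfac n σ (t.eraseIdx (i : ℕ)) jn by rw [hc]
      unfold cfac
      have hstepA : (List.finRange (n+1)).filter
          (fun m => decide ((phiPerm i σ)⁻¹ (Fin.castSucc jn) < m ∧ (phiPerm i σ) m < Fin.castSucc jn)) =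
          ((List.finRange n).map i.succAbove).filter
          (fun m => decide ((phiPerm i σ)⁻¹ (Fin.castSucc jn) < m ∧ (phiPerm i σ) m < Fin.castSucc jn)) := by
        rw [← finRange_filter_ne n i, List.filter_filter]
        refine List.filter_congr (fun m _ => ?_)
        rcases eq_or_ne m i with rfl | hne
        · have hfalse : decide ((phiPerm m σ)⁻¹ (Fin.castSucc jn) < m ∧
              (phiPerm m σ) m < Fin.castSucc jn) = false := by
            simp only [decide_eq_false_iff_not]
            rintro ⟨-, h2⟩
            rw [phiPerm_self] at h2
            exact absurd (lt_trans h2 (Fin.castSucc_lt_last jn)) (lt_irrefl _)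
          rw [hfalse]; simp
        · simp [hne]
      rw [hstepA, List.filter_map, List.map_map]
      have hpred : ((fun m => decide ((phiPerm i σ)⁻¹ (Fin.castSucc jn) < m ∧
          (phiPerm i σ) m < Fin.castSucc jn)) ∘ i.succAbove) =
          (fun m => decide (σ⁻¹ jn < m ∧ σ m < jn)) := by
        funext m
        simp only [Function.comp_apply]
        rw [decide_eq_decide, phiPerm_inv_castSucc, phiPerm_succAbove,
          Fin.succAbove_lt_succAbove_iff, Fin.castSucc_lt_castSucc_iff]
      rw [hpred]
      refine congrArg List.prod (List.map_congr_left (fun m _ => ?_))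
      simp only [Function.comp_apply]
      exact (eraseIdx_getD t n hl i m).symm
    · have hj : n = j := by omega
      subst hj
      have hR : (eTuple n σ (t.eraseIdx (i : ℕ)) ++
          [(t.drop ((i : ℕ)+1)).prod⁻¹ * t.getD (i : ℕ) 1 * (t.drop ((i : ℕ)+1)).prod]).getD n 1 =
          (t.drop ((i : ℕ)+1)).prod⁻¹ * t.getD (i : ℕ) 1 * (t.drop ((i : ℕ)+1)).prod := by
        rw [List.getD_eq_getElem _ 1 (by simp [hlenL]),
          List.getElem_append_right (by rw [hlenL])]
        simp [hlenL]
      rw [hR]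
      show (eTuple (n+1) (phiPerm i σ) t).getD ((Fin.last n : Fin (n+1)) : ℕ) 1 = _
      rw [eTuple_getD (n+1) (phiPerm i σ) t (Fin.last n), phiPerm_inv_last]
      suffices hc : cfac (n+1) (phiPerm i σ) t (Fin.last n) = (t.drop ((i : ℕ)+1)).prod by rw [hc]
      unfold cfac
      have hstep : (List.finRange (n+1)).filter
          (fun m => decide ((phiPerm i σ)⁻¹ (Fin.last n) < m ∧ (phiPerm i σ) m < Fin.last n)) =
          (List.finRange (n+1)).filter (fun m => decide (i < m)) := by
        refine List.filter_congr (fun m _ => ?_)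
        rw [decide_eq_decide, phiPerm_inv_last]
        constructor
        · rintro ⟨h1, -⟩; exact h1
        · intro h1
          refine ⟨h1, ?_⟩
          rw [Fin.lt_last_iff_ne_last]
          intro e
          have hmi : m = i := by
            rw [← phiPerm_inv_last i σ, ← e, Equiv.Perm.inv_apply_self]
          rw [hmi] at h1; exact absurd h1 (lt_irrefl _)
      rw [hstep]
      have hmapval : ((List.finRange (n+1)).filter (fun m => decide (i < m))).map
          (fun m => t.getD m.val 1) =
          (((List.finRange (n+1)).filter (fun m => decide (i < m))).map Fin.val).map
          (fun mv => t.getD mv 1) := by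
        rw [List.map_map]; rfl
      rw [hmapval, map_val_finRange_filter (n+1) _ (fun mv => decide ((i : ℕ) < mv))
        (fun m => by rw [decide_eq_decide]; exact Fin.lt_def),
        range_filter_lt (n+1) (i : ℕ), List.map_map]
      rw [drop_eq_range_map t ((i : ℕ)+1), hl]
      rfl


end BetaAux

theorem betaElt_right_expansion_aux {G : Type*} [Group G] (n : ℕ)
    (A : (m : ℕ) → Equiv.Perm (Fin m) → List ℕ)
    (hA : ∀ m (π : Equiv.Perm (Fin m)), IsReducedWordN m π (A m π))
    (l : List G) (hl : l.length = n + 1) :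
    betaElt (n+1) (A (n+1)) l =
      ∑ i : Fin (n+1), ((-1 : ℤ) ^ (n - (i : ℕ))) •
        FreeAbelianGroup.map
          (fun s => s ++ [(l.drop ((i : ℕ) + 1)).prod⁻¹ *
            l.get (Fin.cast hl.symm i) * (l.drop ((i : ℕ) + 1)).prod])
          (betaElt n (A n) (l.eraseIdx (i : ℕ))) := by
  rw [betaElt]
  have hLHS : ∀ π : Equiv.Perm (Fin (n+1)), hurwitzWord (A (n+1) π) l = eTuple (n+1) π l :=
    fun π => hurwitzWord_reduced (n+1) π _ (hA (n+1) π) l hl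
  simp only [hLHS]
  have hre := Fintype.sum_bijective _ (phiPerm_bijective (n := n))
      (fun p : Fin (n+1) × Equiv.Perm (Fin n) =>
        ((Equiv.Perm.sign (phiPerm p.1 p.2) : ℤˣ) : ℤ) •
          FreeAbelianGroup.of (eTuple (n+1) (phiPerm p.1 p.2) l))
      (fun π => ((Equiv.Perm.sign π : ℤˣ) : ℤ) • FreeAbelianGroup.of (eTuple (n+1) π l))
      (fun p => rfl)
  rw [← hre, Fintype.sum_prod_type]
  refine Finset.sum_congr rfl (fun i _ => ?_)
  rw [betaElt, map_sum, Finset.smul_sum]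
  refine Finset.sum_congr rfl (fun σ _ => ?_)
  dsimp only
  have hlen' : (l.eraseIdx (i : ℕ)).length = n := by
    rw [List.length_eraseIdx]
    have := i.isLt
    simp only [hl]
    rw [if_pos (by omega)]
    omega
  have hred := hurwitzWord_reduced n σ (A n σ) (hA n σ) (l.eraseIdx (i : ℕ)) hlen'
  rw [hred, map_zsmul, FreeAbelianGroup.map_of_apply, eTuple_phi n l hl i σ,
    smul_smul, sign_phiPerm]
  have hg : l.get (Fin.cast hl.symm i) = l.getD (i : ℕ) 1 := by
    rw [List.get_eq_getElem, List.getD_eq_getElem _ 1 (by rw [hl]; exact i.isLt)]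
    rfl
  rw [hg]
  congr 1
  rw [Units.val_mul, Units.val_pow_eq_pow_val]
  simp only [Units.val_neg, Units.val_one]
  ring

/-- `β_t = ∑_{i=1}^k (−1)^{k−i} (β_{t(î)}, (t_{i+1}⋯t_k)⁻¹ t_i (t_{i+1}⋯t_k))`:
the signed Hurwitz sum `β` of a `k`-tuple expands as a signed sum over `i` of
`β` of the tuple with the `i`-th entry removed, with the conjugate
`(t_{i+1}⋯t_k)⁻¹ t_i (t_{i+1}⋯t_k)` appended to each tuple. Here `A` assigns to
every permutation (of every size) a reduced word, defining the braid lifts. -/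
theorem betaElt_right_expansion {G : Type*} [Group G] (k : ℕ) (hk : 2 ≤ k)
    (A : (n : ℕ) → Equiv.Perm (Fin n) → List ℕ)
    (hA : ∀ n (π : Equiv.Perm (Fin n)), IsReducedWordN n π (A n π))
    (l : List G) (hl : l.length = k) :
    betaElt k (A k) l =
      ∑ i : Fin k, ((-1 : ℤ) ^ (k - 1 - (i : ℕ))) •
        FreeAbelianGroup.map
          (fun s => s ++ [(l.drop ((i : ℕ) + 1)).prod⁻¹ *
            l.get (Fin.cast hl.symm i) * (l.drop ((i : ℕ) + 1)).prod])
          (betaElt (k - 1) (A (k - 1)) (l.eraseIdx (i : ℕ))) := by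
  obtain ⟨n, rfl⟩ : ∃ n, k = n + 1 := ⟨k - 1, by omega⟩
  exact betaElt_right_expansion_aux n A hA l hl
end

section
/- For the dihedral group of order 2m, the Milnor fibre F_{Q_0} of its reflection arrangement has H_0(F_{Q_0}; Z) ≅ Z and H_1(F_{Q_0}; Z) ≅ Z^{(m−1)²}; equivalently, for the chain complex 0 → Z[W_+] ⊗ Z^{m−1} →∂ Z[W_−] → 0 with ∂(r ⊗ e_j) = r t_j − r t_{j−1} (r a rotation, t_i the reflections, 2 ≤ j ≤ m), the image of ∂ is the rank-(m−1) submodule of Z[W_−] of elements whose coefficients sum to zero; hence ker ∂ has rank (m−1)² and coker ∂ ≅ Z. -/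
open DihedralGroup

/-- `t_i = s_1 (s_2 s_1)^{i-1}` in the dihedral group of order `2m`, where
`s_1 = sr 0` and `s_2 = sr 1`; these are the reflections for `1 ≤ i ≤ m`. -/
def dihT (m : ℕ) (i : ℕ) : DihedralGroup m :=
  sr 0 * (sr 1 * sr 0) ^ (i - 1)

/-- The boundary map `∂ : Z[W₊] ⊗ Z^{m−1} → Z[W₋]` of the chain complex
computing the homology of the Milnor fibre `F_{Q₀}` for the dihedral group of
order `2m`: the basis element `r ⊗ e_j` (a rotation `r = r_a` together with an
index `j ∈ {2, …, m}`, encoded as `(a, j₀)` with `j = j₀ + 2`) is sent to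
`r t_j − r t_{j−1}`. (The target is the group algebra `Z[W]`; the image lies in
the span `Z[W₋]` of the reflections.) -/
noncomputable def dihBnd (m : ℕ) :
    ((ZMod m × Fin (m - 1)) →₀ ℤ) →ₗ[ℤ] (DihedralGroup m →₀ ℤ) :=
  Finsupp.lsum ℤ fun d => LinearMap.toSpanSingleton ℤ _
    (Finsupp.single (DihedralGroup.r d.1 * dihT m ((d.2 : ℕ) + 2)) (1 : ℤ) -
      Finsupp.single (DihedralGroup.r d.1 * dihT m ((d.2 : ℕ) + 1)) (1 : ℤ))

lemma dih_r_pow (m : ℕ) (c : ZMod m) (k : ℕ) : (r c) ^ k = r (k • c) := by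
  induction k with
  | zero => simp
  | succ n ih => rw [pow_succ, ih, r_mul_r, succ_nsmul]

lemma dihT_succ (m : ℕ) (j : ℕ) : dihT m (j + 1) = sr (-(j : ZMod m)) := by
  unfold dihT
  have h : sr (1 : ZMod m) * sr 0 = r (-1) := by rw [sr_mul_sr]; ring_nf
  rw [Nat.add_sub_cancel, h, dih_r_pow, sr_mul_r, nsmul_eq_mul]
  ring_nf

lemma dihBnd_single (m : ℕ) (a : ZMod m) (j : Fin (m - 1)) (c : ℤ) :
    dihBnd m (Finsupp.single (a, j) c) =
      c • (Finsupp.single (sr (-(j : ZMod m) - 1 - a)) (1 : ℤ) -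
        Finsupp.single (sr (-(j : ZMod m) - a)) (1 : ℤ)) := by
  rw [dihBnd, Finsupp.lsum_single, LinearMap.toSpanSingleton_apply]
  have h2 : ((j : ℕ) + 2) = ((j : ℕ) + 1) + 1 := rfl
  rw [h2, dihT_succ, dihT_succ, r_mul_sr, r_mul_sr]
  push_cast
  ring_nf

noncomputable def dihTau (m : ℕ) : (DihedralGroup m →₀ ℤ) →ₗ[ℤ] ℤ :=
  Finsupp.lsum ℤ fun _ => LinearMap.id

noncomputable def dihN (m : ℕ) : Submodule ℤ (DihedralGroup m →₀ ℤ) :=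
  Finsupp.supported ℤ ℤ (Set.range (sr : ZMod m → DihedralGroup m)) ⊓
    LinearMap.ker (dihTau m)

lemma diff_mem_dihN (m : ℕ) (u v : DihedralGroup m)
    (hu : u ∈ Set.range (sr : ZMod m → DihedralGroup m))
    (hv : v ∈ Set.range (sr : ZMod m → DihedralGroup m)) :
    Finsupp.single u (1:ℤ) - Finsupp.single v 1 ∈ dihN m := by
  refine ⟨sub_mem (Finsupp.single_mem_supported ℤ 1 hu) (Finsupp.single_mem_supported ℤ 1 hv), ?_⟩
  have : dihTau m (Finsupp.single u (1:ℤ) - Finsupp.single v 1) = 0 := by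
    rw [map_sub, dihTau, Finsupp.lsum_single, Finsupp.lsum_single]; simp
  exact this

lemma dihBnd_range_le (m : ℕ) : LinearMap.range (dihBnd m) ≤ dihN m := by
  rintro x ⟨y, rfl⟩
  induction y using Finsupp.induction_linear with
  | zero => rw [map_zero]; exact zero_mem _
  | add f g hf hg => rw [map_add]; exact add_mem hf hg
  | single d c =>
    obtain ⟨a, j⟩ := d
    rw [dihBnd_single]
    exact Submodule.smul_mem _ _ (diff_mem_dihN m _ _ ⟨_, rfl⟩ ⟨_, rfl⟩)

-- generators of the range
lemma gen0_mem (m : ℕ) (hm : 3 ≤ m) (a : ZMod m) :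
    Finsupp.single (sr (a - 1)) (1:ℤ) - Finsupp.single (sr a) 1
      ∈ LinearMap.range (dihBnd m) := by
  refine ⟨Finsupp.single (-a, ⟨0, by omega⟩) 1, ?_⟩
  rw [dihBnd_single, one_smul]
  norm_num
  rw [neg_add_eq_sub]

lemma gen1_mem (m : ℕ) (hm : 3 ≤ m) (k : ℕ) :
    Finsupp.single (sr ((k : ZMod m))) (1:ℤ) - Finsupp.single (sr 0) 1
      ∈ LinearMap.range (dihBnd m) := by
  induction k with
  | zero => simp only [Nat.cast_zero, sub_self]; exact zero_mem _
  | succ n ih =>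
    have h := neg_mem (gen0_mem m hm ((n:ZMod m) + 1))
    rw [neg_sub, add_sub_cancel_right] at h
    have := add_mem h ih
    rw [sub_add_sub_cancel] at this
    push_cast
    exact this

lemma gen2_mem (m : ℕ) (hm : 3 ≤ m) (j : ZMod m) :
    Finsupp.single (sr j) (1:ℤ) - Finsupp.single (sr 0) 1
      ∈ LinearMap.range (dihBnd m) := by
  have : NeZero m := ⟨by omega⟩
  obtain ⟨k, rfl⟩ := ZMod.natCast_zmod_surjective j
  exact gen1_mem m hm k

lemma dihN_le_range (m : ℕ) (hm : 3 ≤ m) : dihN m ≤ LinearMap.range (dihBnd m) := by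
  have key : ∀ x : DihedralGroup m →₀ ℤ,
      ↑x.support ⊆ Set.range (sr : ZMod m → DihedralGroup m) →
      x - (dihTau m x) • Finsupp.single (sr 0) 1 ∈ LinearMap.range (dihBnd m) := by
    intro x
    induction x using Finsupp.induction with
    | zero => intro _; simp only [map_zero, zero_smul, sub_zero]; exact zero_mem _
    | single_add a b f ha hb ih =>
      intro hsupp
      have hfsupp : ↑f.support ⊆ Set.range (sr : ZMod m → DihedralGroup m) := by
        intro w hw
        have hw2 : w ∈ f.support := hw
        have hw' : f w ≠ 0 := Finsupp.mem_support_iff.mp hw2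
        have hwa : w ≠ a := fun h => ha (h ▸ hw2)
        apply hsupp
        have : w ∈ (Finsupp.single a b + f).support := by
          rw [Finsupp.mem_support_iff, Finsupp.add_apply, Finsupp.single_apply,
            if_neg (fun h : a = w => hwa h.symm), zero_add]
          exact hw'
        exact this
      have haf : a ∈ (Finsupp.single a b + f).support := by
        rw [Finsupp.mem_support_iff, Finsupp.add_apply, Finsupp.single_eq_same,
          Finsupp.notMem_support_iff.mp ha, add_zero]
        exact hb
      obtain ⟨j, rfl⟩ : a ∈ Set.range (sr : ZMod m → DihedralGroup m) := hsupp haf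
      have htau : dihTau m (Finsupp.single (sr j) b + f) = b + dihTau m f := by
        rw [map_add, dihTau, Finsupp.lsum_single]; rfl
      have heq : (Finsupp.single (sr j) b + f) -
          (dihTau m (Finsupp.single (sr j) b + f)) • Finsupp.single (sr 0) (1:ℤ) =
          b • (Finsupp.single (sr j) (1:ℤ) - Finsupp.single (sr 0) 1) +
            (f - (dihTau m f) • Finsupp.single (sr 0) 1) := by
        simp only [htau, add_smul, smul_sub, Finsupp.smul_single, smul_eq_mul, mul_one]
        abel
      rw [heq]
      exact add_mem (Submodule.smul_mem _ _ (gen2_mem m hm j)) (ih hfsupp)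
  rintro x ⟨hsupp, hker⟩
  have hx := key x hsupp
  rw [LinearMap.mem_ker.mp hker, zero_smul, sub_zero] at hx
  exact hx

lemma dihBnd_range_eq (m : ℕ) (hm : 3 ≤ m) : LinearMap.range (dihBnd m) = dihN m :=
  le_antisymm (dihBnd_range_le m) (dihN_le_range m hm)

noncomputable def dihSigma (m : ℕ) : (ZMod m →₀ ℤ) →ₗ[ℤ] ℤ :=
  Finsupp.lsum ℤ fun _ => LinearMap.id

noncomputable def dihPhi (m : ℕ) : (ZMod m →₀ ℤ) →ₗ[ℤ] (DihedralGroup m →₀ ℤ) :=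
  Finsupp.lmapDomain ℤ ℤ (sr : ZMod m → DihedralGroup m)

lemma sr_injective (m : ℕ) : Function.Injective (sr : ZMod m → DihedralGroup m) := by
  intro a b h
  injection h

lemma dihPhi_injective (m : ℕ) : Function.Injective (dihPhi m) :=
  Finsupp.mapDomain_injective (sr_injective m)

lemma tau_comp_phi (m : ℕ) : (dihTau m).comp (dihPhi m) = dihSigma m := by
  apply Finsupp.lhom_ext
  intro c b
  simp [dihTau, dihPhi, dihSigma, Finsupp.lmapDomain_apply, Finsupp.mapDomain_single,
    Finsupp.lsum_single]

lemma map_ker_sigma (m : ℕ) :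
    (LinearMap.ker (dihSigma m)).map (dihPhi m) = dihN m := by
  ext x
  rw [Submodule.mem_map, dihN, Submodule.mem_inf]
  constructor
  · rintro ⟨y, hy, rfl⟩
    constructor
    · rw [Finsupp.mem_supported]
      refine subset_trans (b := sr '' ↑y.support) ?_ (Set.image_subset_range _ _)
      rw [dihPhi, Finsupp.lmapDomain_apply]
      exact_mod_cast Finsupp.mapDomain_support
    · rw [LinearMap.mem_ker, ← LinearMap.comp_apply, tau_comp_phi]
      exact hy
  · rintro ⟨hsupp, hker⟩
    refine ⟨Finsupp.comapDomain _ x ((sr_injective m).injOn), ?_, ?_⟩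
    · rw [LinearMap.mem_ker, ← tau_comp_phi m, LinearMap.comp_apply, dihPhi,
        Finsupp.lmapDomain_apply,
        Finsupp.mapDomain_comapDomain (f := sr) (sr_injective m) x
          ((Finsupp.mem_supported ℤ x).mp hsupp)]
      exact LinearMap.mem_ker.mp hker
    · rw [dihPhi, Finsupp.lmapDomain_apply]
      exact Finsupp.mapDomain_comapDomain (f := sr) (sr_injective m) x
        ((Finsupp.mem_supported ℤ x).mp hsupp)

lemma sigma_surjective (m : ℕ) : Function.Surjective (dihSigma m) := by
  intro z
  refine ⟨Finsupp.single 0 z, ?_⟩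
  rw [dihSigma, Finsupp.lsum_single]
  rfl

lemma dihTau_apply (m : ℕ) (x : DihedralGroup m →₀ ℤ) :
    dihTau m x = x.sum fun _ c => c := rfl

/-- For the dihedral group of order `2m`, the Milnor fibre `F_{Q₀}` of its
reflection arrangement has `H₀(F_{Q₀}; ℤ) ≅ ℤ` and
`H₁(F_{Q₀}; ℤ) ≅ ℤ^{(m−1)²}`: for the chain complex
`0 → Z[W₊] ⊗ Z^{m−1} →∂ Z[W₋] → 0` with `∂(r ⊗ e_j) = r t_j − r t_{j−1}`,
the image of `∂` is exactly the submodule of `Z[W₋]` (the span of the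
reflections) consisting of the elements whose coefficients sum to zero; the
kernel of `∂` has rank `(m−1)²` (it is `H₁`), and the quotient of `Z[W₋]` by
the image (the cokernel, i.e. `H₀`) is isomorphic to `ℤ`. -/
theorem dihedral_milnor_fibre_homology (m : ℕ) (hm : 3 ≤ m) :
    (∀ x : DihedralGroup m →₀ ℤ,
      x ∈ LinearMap.range (dihBnd m) ↔
        ((∀ w ∈ x.support, ∃ j : ZMod m, w = DihedralGroup.sr j) ∧
          (x.sum fun _ c => c) = 0)) ∧
    Nonempty ((LinearMap.ker (dihBnd m)) ≃ₗ[ℤ] (Fin ((m - 1) ^ 2) → ℤ)) ∧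
    Nonempty
      ((↥(Submodule.span ℤ {x : DihedralGroup m →₀ ℤ |
            ∃ j : ZMod m, x = Finsupp.single (DihedralGroup.sr j) (1 : ℤ)}) ⧸
          Submodule.comap
            (Submodule.span ℤ {x : DihedralGroup m →₀ ℤ |
              ∃ j : ZMod m, x = Finsupp.single (DihedralGroup.sr j) (1 : ℤ)}).subtype
            (LinearMap.range (dihBnd m))) ≃ₗ[ℤ] ℤ) := by
  have hNZ : NeZero m := ⟨by omega⟩
  refine ⟨?_, ?_, ?_⟩
  · -- part 1
    intro x
    rw [dihBnd_range_eq m hm, dihN, Submodule.mem_inf]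
    constructor
    · rintro ⟨hsupp, hker⟩
      refine ⟨fun w hw => ?_, ?_⟩
      · obtain ⟨j, hj⟩ := (Finsupp.mem_supported ℤ x).mp hsupp hw
        exact ⟨j, hj.symm⟩
      · rw [← dihTau_apply]
        exact LinearMap.mem_ker.mp hker
    · rintro ⟨h1, h2⟩
      refine ⟨(Finsupp.mem_supported ℤ x).mpr fun w hw => ?_, ?_⟩
      · obtain ⟨j, hj⟩ := h1 w hw
        exact ⟨j, hj.symm⟩
      · rw [LinearMap.mem_ker, dihTau_apply]
        exact h2
  · -- part 2
    obtain ⟨n₁, b₁⟩ := Submodule.basisOfPid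
      (Finsupp.basisSingleOne : Module.Basis (ZMod m) ℤ (ZMod m →₀ ℤ)) (LinearMap.ker (dihSigma m))
    obtain ⟨n₂, b₂⟩ := Submodule.basisOfPid
      (Finsupp.basisSingleOne : Module.Basis (ZMod m × Fin (m - 1)) ℤ _) (LinearMap.ker (dihBnd m))
    have hrk₁ : Module.rank ℤ (LinearMap.ker (dihSigma m)) = n₁ := by
      rw [← b₁.mk_eq_rank'', Cardinal.mk_fin]
    have hrk₂ : Module.rank ℤ (LinearMap.ker (dihBnd m)) = n₂ := by
      rw [← b₂.mk_eq_rank'', Cardinal.mk_fin]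
    have e1 : (m : Cardinal) = ((1 + n₁ : ℕ) : Cardinal) := by
      have h := LinearMap.rank_eq_of_surjective (sigma_surjective m)
      rw [rank_finsupp_self', Cardinal.mk_fintype, ZMod.card, Module.rank_self, hrk₁] at h
      push_cast
      exact h
    have hn₁ : n₁ = m - 1 := by
      have := Nat.cast_inj.mp e1
      omega
    have erange : Module.rank ℤ (LinearMap.range (dihBnd m)) = n₁ := by
      have equiv : (LinearMap.ker (dihSigma m)) ≃ₗ[ℤ] (LinearMap.range (dihBnd m)) :=
        (Submodule.equivMapOfInjective (dihPhi m) (dihPhi_injective m) _).trans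
          (LinearEquiv.ofEq _ _ ((map_ker_sigma m).trans (dihBnd_range_eq m hm).symm))
      rw [← equiv.rank_eq, hrk₁]
    have e2 : ((m * (m - 1) : ℕ) : Cardinal) = ((n₁ + n₂ : ℕ) : Cardinal) := by
      have h := LinearMap.rank_range_add_rank_ker (dihBnd m)
      rw [rank_finsupp_self', Cardinal.mk_fintype, erange, hrk₂] at h
      push_cast
      rw [h]
      simp [ZMod.card]
    have hn₂ : n₂ = (m - 1) ^ 2 := by
      have h : m * (m - 1) = n₁ + n₂ := Nat.cast_inj.mp e2
      have h2 : m * (m - 1) = (m - 1) + (m - 1) ^ 2 := by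
        obtain ⟨k, rfl⟩ : ∃ k, m = k + 1 := ⟨m - 1, by omega⟩
        simp only [Nat.add_sub_cancel]
        ring
      rw [hn₁] at h
      rw [h2] at h
      exact (Nat.add_left_cancel h).symm
    exact ⟨(b₂.reindex (finCongr hn₂)).equivFun⟩
  · -- part 3
    have hPle : Submodule.span ℤ {x : DihedralGroup m →₀ ℤ |
          ∃ j : ZMod m, x = Finsupp.single (DihedralGroup.sr j) (1 : ℤ)} ≤
        Finsupp.supported ℤ ℤ (Set.range (sr : ZMod m → DihedralGroup m)) := by
      rw [Submodule.span_le]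
      rintro x ⟨j, rfl⟩
      exact Finsupp.single_mem_supported ℤ 1 ⟨j, rfl⟩
    set P := Submodule.span ℤ {x : DihedralGroup m →₀ ℤ |
      ∃ j : ZMod m, x = Finsupp.single (DihedralGroup.sr j) (1 : ℤ)} with hP
    let ψ : P →ₗ[ℤ] ℤ := (dihTau m).comp P.subtype
    have hker : LinearMap.ker ψ = Submodule.comap P.subtype (LinearMap.range (dihBnd m)) := by
      ext z
      rw [LinearMap.mem_ker, Submodule.mem_comap, dihBnd_range_eq m hm, dihN,
        Submodule.mem_inf]
      constructor
      · intro h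
        exact ⟨hPle z.2, h⟩
      · rintro ⟨-, h⟩
        exact h
    have hsurj : Function.Surjective ψ := by
      intro z
      refine ⟨⟨z • Finsupp.single (sr 0) 1,
        Submodule.smul_mem _ _ (Submodule.subset_span ⟨0, rfl⟩)⟩, ?_⟩
      show dihTau m (z • Finsupp.single (sr 0) 1) = z
      rw [map_smul, dihTau, Finsupp.lsum_single]
      simp
    exact ⟨(Submodule.quotEquivOfEq _ _ hker.symm).trans (ψ.quotKerEquivOfSurjective hsurj)⟩
end
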